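/- Let G be a one-dimensional simplicial complex which is a Barycentric refinement, with connection matrix L. Then the number of connected components b0 of G equals the multiplicity of the eigenvalue 1 of L, and the genus b1 (first Betti number) equals the multiplicity of the eigenvalue -1 of L. -/

import Mathlib

open Module Matrix LinearMap

/-- Kernels of matrices related by an invertible diagonal scaling have equal finrank. -/
private lemma finrank_ker_scale {ι κ : Type*} [Fintype ι] [Fintype κ]
    (M N : Matrix κ ι ℝ) (s : ι → ℝ) (hs : ∀ i, s i * s i = 1)
    (hMN : ∀ u, M.mulVec u = 0 ↔ N.mulVec (fun i => s i * u i) = 0) :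
    Module.finrank ℝ (LinearMap.ker M.mulVecLin) =
      Module.finrank ℝ (LinearMap.ker N.mulVecLin) := by
  let f : (ι → ℝ) →ₗ[ℝ] (ι → ℝ) :=
    { toFun := fun u i => s i * u i
      map_add' := by intros; funext i; simp [mul_add]
      map_smul' := by intros; funext i; simp; ring }
  have hf : Function.Involutive f := by
    intro u; funext i
    show s i * (s i * u i) = u i
    rw [← mul_assoc, hs, one_mul]
  let e := LinearEquiv.ofInvolutive f hf
  have hker : LinearMap.ker M.mulVecLin =
      (LinearMap.ker N.mulVecLin).comap (e : (ι → ℝ) →ₗ[ℝ] (ι → ℝ)) := by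
    ext u
    simpa [Submodule.mem_comap, LinearMap.mem_ker, Matrix.mulVecLin_apply, e,
      LinearEquiv.ofInvolutive, f] using hMN u
  rw [hker, Submodule.comap_equiv_eq_map_symm]
  exact LinearEquiv.finrank_map_eq _ _

/-- Extension by zero on the left component, as a linear map. -/
private def elimL {α β : Type*} : (α → ℝ) →ₗ[ℝ] (α ⊕ β → ℝ) where
  toFun u := Sum.elim u 0
  map_add' u v := by funext z; cases z <;> simp
  map_smul' c u := by funext z; cases z <;> simp

/-- Extension by zero on the right component, as a linear map. -/
private def elimR {α β : Type*} : (β → ℝ) →ₗ[ℝ] (α ⊕ β → ℝ) where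
  toFun w := Sum.elim 0 w
  map_add' u v := by funext z; cases z <;> simp
  map_smul' c u := by funext z; cases z <;> simp

private lemma elimL_inj {α β : Type*} : Function.Injective (elimL (α := α) (β := β)) := by
  intro u v huv; funext a; exact congrFun huv (Sum.inl a)

private lemma elimR_inj {α β : Type*} : Function.Injective (elimR (α := α) (β := β)) := by
  intro u v huv; funext b; exact congrFun huv (Sum.inr b)

theorem connection_hears_betti_1dim {V : Type*} [Fintype V] [DecidableEq V]
    (K : Finset (Finset V))
    (hK1 : ∀ x ∈ K, x.card = 1 ∨ x.card = 2)
    (hKc : ∀ x ∈ K, ∀ y ⊆ x, y.Nonempty → y ∈ K)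
    (Γ : SimpleGraph {x // x ∈ K}) [DecidableRel Γ.Adj]
    (hΓ : ∀ x y, Γ.Adj x y ↔ ((x : Finset V) ⊂ (y : Finset V) ∨ (y : Finset V) ⊂ (x : Finset V)))
    (E : Type*) [Fintype E] [DecidableEq E]
    (t h : E → {x // x ∈ K})
    (hth : ∀ e, Γ.Adj (t e) (h e))
    (hbij : ∀ u v, Γ.Adj u v → ∃! e, s(t e, h e) = s(u, v))
    (d0 : Matrix E {x // x ∈ K} ℝ)
    (hd0 : ∀ e v, d0 e v = if v = h e then 1 else if v = t e then -1 else 0)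
    (ends : ({x // x ∈ K} ⊕ E) → Finset {x // x ∈ K})
    (hends : ∀ z, ends z = Sum.elim (fun x => ({x} : Finset {x // x ∈ K}))
      (fun e => {t e, h e}) z)
    (L : Matrix ({x // x ∈ K} ⊕ E) ({x // x ∈ K} ⊕ E) ℝ)
    (hL : ∀ z w, L z w = if (ends z ∩ ends w).Nonempty then 1 else 0) :
    Module.finrank ℝ (LinearMap.ker (Matrix.toLin' (d0.transpose * d0))) =
      Module.finrank ℝ (Module.End.eigenspace (Matrix.toLin' L) 1) ∧
    Module.finrank ℝ (LinearMap.ker (Matrix.toLin' (d0 * d0.transpose))) =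
      Module.finrank ℝ (Module.End.eigenspace (Matrix.toLin' L) (-1)) := by
  classical
  have hne : ∀ e, t e ≠ h e := fun e => (hth e).ne
  set σ : {x // x ∈ K} → ℝ := fun v => if (v : Finset V).card = 1 then 1 else -1 with hσdef
  have hσ2 : ∀ v, σ v * σ v = 1 := by
    intro v; by_cases hc : (v : Finset V).card = 1 <;> simp [hσdef, hc]
  have hσth : ∀ e, σ (t e) * σ (h e) = -1 := by
    intro e
    have hadj := (hΓ _ _).mp (hth e)
    have hct := hK1 _ (t e).2
    have hch := hK1 _ (h e).2
    rcases hadj with hsub | hsub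
    · have hlt := Finset.card_lt_card hsub
      have h1 : ((t e : Finset V)).card = 1 := by omega
      have h2 : ((h e : Finset V)).card = 2 := by omega
      simp [hσdef, h1, h2]
    · have hlt := Finset.card_lt_card hsub
      have h1 : ((h e : Finset V)).card = 1 := by omega
      have h2 : ((t e : Finset V)).card = 2 := by omega
      simp [hσdef, h1, h2]
  set ε : E → ℝ := fun e => σ (h e) with hεdef
  have hε2 : ∀ e, ε e * ε e = 1 := fun e => hσ2 (h e)
  have hεne : ∀ e, ε e ≠ 0 := by
    intro e h0
    have := hε2 e; rw [h0, mul_zero] at this; norm_num at this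
  set B : Matrix E {x // x ∈ K} ℝ := fun e v => if v = t e ∨ v = h e then 1 else 0 with hBdef
  have hBd : ∀ e v, B e v = ε e * (d0 e v * σ v) := by
    intro e v
    rw [hd0]
    by_cases hv1 : v = h e
    · subst hv1
      have h1 : B e (h e) = 1 := by simp [hBdef]
      rw [h1, if_pos rfl]
      have := hσ2 (h e)
      simp only [hεdef]
      linear_combination -this
    · by_cases hv2 : v = t e
      · subst hv2
        have h1 : B e (t e) = 1 := by simp [hBdef]
        rw [h1, if_neg hv1, if_pos rfl]
        simp only [hεdef]
        linear_combination hσth e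
      · simp [hBdef, hv1, hv2]
  -- mulVec comparison with d0
  have hBu : ∀ (u : {x // x ∈ K} → ℝ) e,
      B.mulVec u e = ε e * d0.mulVec (fun v => σ v * u v) e := by
    intro u e
    simp only [Matrix.mulVec, dotProduct]
    rw [Finset.mul_sum]
    exact Finset.sum_congr rfl fun v _ => by rw [hBd]; ring
  have hBtw : ∀ (w : E → ℝ) v,
      B.transpose.mulVec w v = σ v * d0.transpose.mulVec (fun e => ε e * w e) v := by
    intro w v
    simp only [Matrix.mulVec, dotProduct, Matrix.transpose_apply]
    rw [Finset.mul_sum]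
    exact Finset.sum_congr rfl fun e _ => by rw [hBd]; ring
  have hσne : ∀ v, σ v ≠ 0 := by
    intro v h0
    have := hσ2 v; rw [h0, mul_zero] at this; norm_num at this
  have hkerB : ∀ u, B.mulVec u = 0 ↔ d0.mulVec (fun v => σ v * u v) = 0 := by
    intro u
    rw [funext_iff, funext_iff]
    refine forall_congr' fun e => ?_
    simp only [Pi.zero_apply]
    rw [hBu, mul_eq_zero]
    simp [hεne e]
  have hkerBt : ∀ w, B.transpose.mulVec w = 0 ↔ d0.transpose.mulVec (fun e => ε e * w e) = 0 := by
    intro w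
    rw [funext_iff, funext_iff]
    refine forall_congr' fun v => ?_
    simp only [Pi.zero_apply]
    rw [hBtw, mul_eq_zero]
    simp [hσne v]
  -- entries of L
  have hiff1 : ∀ v v' : {x // x ∈ K}, (({v} ∩ {v'} : Finset {x // x ∈ K})).Nonempty ↔ v = v' := by
    intro v v'
    constructor
    · rintro ⟨a, ha⟩
      simp only [Finset.mem_inter, Finset.mem_singleton] at ha
      rw [← ha.1, ← ha.2]
    · rintro rfl
      exact ⟨v, by simp⟩
  have hiff2 : ∀ (v : {x // x ∈ K}) e,
      (({v} ∩ {t e, h e} : Finset {x // x ∈ K})).Nonempty ↔ v = t e ∨ v = h e := by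
    intro v e
    constructor
    · rintro ⟨a, ha⟩
      simp only [Finset.mem_inter, Finset.mem_singleton, Finset.mem_insert] at ha
      rcases ha with ⟨rfl, hb⟩
      exact hb
    · rintro hv
      exact ⟨v, by simp only [Finset.mem_inter, Finset.mem_singleton, Finset.mem_insert]; tauto⟩
  have hiff3 : ∀ e (v : {x // x ∈ K}),
      (({t e, h e} ∩ {v} : Finset {x // x ∈ K})).Nonempty ↔ v = t e ∨ v = h e := by
    intro e v
    rw [Finset.inter_comm]
    exact hiff2 v e
  have hLvv : ∀ v v', L (Sum.inl v) (Sum.inl v') = if v = v' then 1 else 0 := by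
    intro v v'
    rw [hL, hends, hends]
    simp only [Sum.elim_inl]
    exact if_congr (hiff1 v v') rfl rfl
  have hLve : ∀ v e, L (Sum.inl v) (Sum.inr e) = B e v := by
    intro v e
    rw [hL, hends, hends]
    simp only [Sum.elim_inl, Sum.elim_inr, hBdef]
    exact if_congr (hiff2 v e) rfl rfl
  have hLev : ∀ e v, L (Sum.inr e) (Sum.inl v) = B e v := by
    intro e v
    rw [hL, hends, hends]
    simp only [Sum.elim_inl, Sum.elim_inr, hBdef]
    exact if_congr (hiff3 e v) rfl rfl
  -- the key cardinality identity
  have hcard : ∀ e f, ((({t e, h e} ∩ {t f, h f} : Finset {x // x ∈ K})).card : ℝ)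
      = (if (({t e, h e} ∩ {t f, h f} : Finset {x // x ∈ K})).Nonempty then (1:ℝ) else 0)
        + (if e = f then (1:ℝ) else 0) := by
    intro e f
    by_cases hef : e = f
    · subst hef
      rw [Finset.inter_self, if_pos ⟨t e, by simp⟩, if_pos rfl]
      rw [Finset.card_insert_of_notMem (by simp [hne e]), Finset.card_singleton]
      norm_num
    · have hle : (({t e, h e} ∩ {t f, h f} : Finset {x // x ∈ K})).card ≤ 1 := by
        by_contra hgt
        push_neg at hgt
        obtain ⟨a, ha, b, hb, hab⟩ := Finset.one_lt_card.mp hgt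
        have hsub1 : ({a, b} : Finset {x // x ∈ K}) ⊆ {t e, h e} := by
          intro x hx
          rcases Finset.mem_insert.mp hx with rfl | hx
          · exact Finset.mem_of_mem_inter_left ha
          · rw [Finset.mem_singleton] at hx; subst hx
            exact Finset.mem_of_mem_inter_left hb
        have hsub2 : ({a, b} : Finset {x // x ∈ K}) ⊆ {t f, h f} := by
          intro x hx
          rcases Finset.mem_insert.mp hx with rfl | hx
          · exact Finset.mem_of_mem_inter_right ha
          · rw [Finset.mem_singleton] at hx; subst hx
            exact Finset.mem_of_mem_inter_right hb
        have heq1 : ({a, b} : Finset {x // x ∈ K}) = {t e, h e} :=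
          Finset.eq_of_subset_of_card_le hsub1
            (by simp [Finset.card_pair hab, Finset.card_pair (hne e)])
        have heq2 : ({a, b} : Finset {x // x ∈ K}) = {t f, h f} :=
          Finset.eq_of_subset_of_card_le hsub2
            (by simp [Finset.card_pair hab, Finset.card_pair (hne f)])
        have heq : ({t e, h e} : Finset {x // x ∈ K}) = {t f, h f} := heq1 ▸ heq2
        have h1 : t f ∈ ({t e, h e} : Finset {x // x ∈ K}) := by rw [heq]; simp
        have h2 : h f ∈ ({t e, h e} : Finset {x // x ∈ K}) := by rw [heq]; simp
        simp only [Finset.mem_insert, Finset.mem_singleton] at h1 h2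
        have hsym : s(t f, h f) = s(t e, h e) := by
          rw [Sym2.eq_iff]
          rcases h1 with h1 | h1 <;> rcases h2 with h2 | h2
          · exact absurd (h1.trans h2.symm) (hne f)
          · exact Or.inl ⟨h1, h2⟩
          · exact Or.inr ⟨h1, h2⟩
          · exact absurd (h1.trans h2.symm) (hne f)
        exact hef ((hbij (t e) (h e) (hth e)).unique rfl hsym)
      rcases Finset.eq_empty_or_nonempty
          (({t e, h e} ∩ {t f, h f} : Finset {x // x ∈ K})) with hE | hNE
      · rw [hE]
        simp [hef]
      · rw [if_pos hNE, if_neg hef]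
        have hpos := Finset.card_pos.mpr hNE
        have : (({t e, h e} ∩ {t f, h f} : Finset {x // x ∈ K})).card = 1 := by omega
        rw [this]; norm_num
  have hLee : ∀ e f, L (Sum.inr e) (Sum.inr f)
      = (∑ v, B e v * B f v) - (if e = f then (1:ℝ) else 0) := by
    intro e f
    have hsum : (∑ v, B e v * B f v)
        = ((({t e, h e} ∩ {t f, h f} : Finset {x // x ∈ K})).card : ℝ) := by
      have hterm : ∀ v, B e v * B f v
          = if v ∈ ({t e, h e} ∩ {t f, h f} : Finset {x // x ∈ K}) then (1:ℝ) else 0 := by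
        intro v
        simp only [hBdef, Finset.mem_inter, Finset.mem_insert, Finset.mem_singleton]
        by_cases h1 : v = t e ∨ v = h e <;> by_cases h2 : v = t f ∨ v = h f <;>
          simp [h1, h2]
      rw [Finset.sum_congr rfl fun v _ => hterm v, Finset.sum_ite_mem, Finset.univ_inter,
        Finset.sum_const, nsmul_eq_mul, mul_one]
    rw [hL, hends, hends]
    simp only [Sum.elim_inr]
    rw [hsum, hcard e f]
    ring
    exact if_congr Iff.rfl rfl rfl
  -- block description of L.mulVec
  have hmulinl : ∀ (x : ({x // x ∈ K} ⊕ E) → ℝ) v,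
      L.mulVec x (Sum.inl v)
        = x (Sum.inl v) + B.transpose.mulVec (fun e => x (Sum.inr e)) v := by
    intro x v
    have hexp : L.mulVec x (Sum.inl v)
        = (∑ v', (if v = v' then (1:ℝ) else 0) * x (Sum.inl v'))
          + ∑ e, B e v * x (Sum.inr e) := by
      simp only [Matrix.mulVec, dotProduct, Fintype.sum_sum_type]
      congr 1
      · exact Finset.sum_congr rfl fun v' _ => by rw [hLvv]
      · exact Finset.sum_congr rfl fun e _ => by rw [hLve]
    rw [hexp]
    congr 1
    simp [ite_mul, Fintype.sum_ite_eq]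
  have hmulinr : ∀ (x : ({x // x ∈ K} ⊕ E) → ℝ) e,
      L.mulVec x (Sum.inr e)
        = B.mulVec (fun v => x (Sum.inl v)) e
          + B.mulVec (B.transpose.mulVec (fun e' => x (Sum.inr e'))) e - x (Sum.inr e) := by
    intro x e
    have hexp : L.mulVec x (Sum.inr e)
        = (∑ v, B e v * x (Sum.inl v))
          + ∑ f, ((∑ v, B e v * B f v) - (if e = f then (1:ℝ) else 0)) * x (Sum.inr f) := by
      simp only [Matrix.mulVec, dotProduct, Fintype.sum_sum_type]
      congr 1
      · exact Finset.sum_congr rfl fun v _ => by rw [hLev]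
      · exact Finset.sum_congr rfl fun f _ => by rw [hLee]
    rw [hexp]
    have h2 : ∑ f, ((∑ v, B e v * B f v) - (if e = f then (1:ℝ) else 0)) * x (Sum.inr f)
        = (∑ f, (∑ v, B e v * B f v) * x (Sum.inr f)) - x (Sum.inr e) := by
      rw [Finset.sum_congr rfl fun f _ => sub_mul _ _ (x (Sum.inr f)), Finset.sum_sub_distrib]
      congr 1
      simp [ite_mul, Fintype.sum_ite_eq]
    have h3 : (∑ f, (∑ v, B e v * B f v) * x (Sum.inr f))
        = B.mulVec (B.transpose.mulVec (fun e' => x (Sum.inr e'))) e := by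
      calc ∑ f, (∑ v, B e v * B f v) * x (Sum.inr f)
          = ∑ f, ∑ v, B e v * B f v * x (Sum.inr f) :=
            Finset.sum_congr rfl fun f _ => Finset.sum_mul _ _ _
        _ = ∑ v, ∑ f, B e v * B f v * x (Sum.inr f) := Finset.sum_comm
        _ = ∑ v, B e v * ∑ f, B f v * x (Sum.inr f) := by
            refine Finset.sum_congr rfl fun v _ => ?_
            rw [Finset.mul_sum]
            exact Finset.sum_congr rfl fun f _ => by ring
        _ = B.mulVec (B.transpose.mulVec (fun e' => x (Sum.inr e'))) e := by
            simp only [Matrix.mulVec, dotProduct, Matrix.transpose_apply]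
    rw [h2, h3, show (∑ v, B e v * x (Sum.inl v)) = B.mulVec (fun v => x (Sum.inl v)) e from rfl]
    ring
  -- eigenspace 1
  have heig1 : Module.End.eigenspace (Matrix.toLin' L) 1
      = Submodule.map elimL (LinearMap.ker B.mulVecLin) := by
    ext x
    rw [Module.End.mem_eigenspace_iff, Matrix.toLin'_apply, one_smul, Submodule.mem_map]
    constructor
    · intro hx
      set uu : {x // x ∈ K} → ℝ := fun v => x (Sum.inl v) with huu
      set ww : E → ℝ := fun e => x (Sum.inr e) with hww
      have hw0 : B.transpose.mulVec ww = 0 := by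
        funext v
        have hv := congrFun hx (Sum.inl v)
        rw [hmulinl x v] at hv
        have : uu v + B.transpose.mulVec ww v = uu v := hv
        rw [Pi.zero_apply]; linarith
      have hw2 : ∀ e, B.mulVec uu e = 2 * ww e := by
        intro e
        have hv := congrFun hx (Sum.inr e)
        rw [hmulinr x e] at hv
        rw [hw0, Matrix.mulVec_zero] at hv
        have : B.mulVec uu e + 0 - ww e = ww e := hv
        linarith
      have hBuw : B.mulVec uu = (2:ℝ) • ww := funext fun e => by
        rw [hw2 e]; rfl
      have hker : uu ∈ LinearMap.ker B.mulVecLin := by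
        rw [← Matrix.ker_mulVecLin_transpose_mul_self, LinearMap.mem_ker,
          Matrix.mulVecLin_apply, ← Matrix.mulVec_mulVec, hBuw, Matrix.mulVec_smul, hw0,
          smul_zero]
      have hB0 : B.mulVec uu = 0 := by
        rwa [LinearMap.mem_ker, Matrix.mulVecLin_apply] at hker
      have hwz : ∀ e, ww e = 0 := by
        intro e
        have := hw2 e
        rw [congrFun hB0 e] at this
        simp only [Pi.zero_apply] at this
        linarith
      refine ⟨uu, hker, ?_⟩
      funext z
      cases z with
      | inl v => rfl
      | inr e => exact (hwz e).symm
    · rintro ⟨uu, hker, rfl⟩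
      have hB0 : B.mulVec uu = 0 := by
        rwa [LinearMap.mem_ker, Matrix.mulVecLin_apply] at hker
      have hcompr : (fun e => (elimL uu : ({x // x ∈ K} ⊕ E) → ℝ) (Sum.inr e)) = (0 : E → ℝ) := rfl
      have hcompl : (fun v => (elimL uu : ({x // x ∈ K} ⊕ E) → ℝ) (Sum.inl v)) = uu := rfl
      funext z
      cases z with
      | inl v =>
        rw [hmulinl _ v, hcompr, Matrix.mulVec_zero]
        simp
      | inr e =>
        rw [hmulinr _ e, hcompr, hcompl, Matrix.mulVec_zero, Matrix.mulVec_zero, hB0]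
        simp [elimL]
  -- eigenspace -1
  have heig2 : Module.End.eigenspace (Matrix.toLin' L) (-1)
      = Submodule.map elimR (LinearMap.ker B.transpose.mulVecLin) := by
    ext x
    rw [Module.End.mem_eigenspace_iff, Matrix.toLin'_apply, Submodule.mem_map]
    constructor
    · intro hx
      set uu : {x // x ∈ K} → ℝ := fun v => x (Sum.inl v) with huu
      set ww : E → ℝ := fun e => x (Sum.inr e) with hww
      have hu : ∀ v, B.transpose.mulVec ww v = -2 * uu v := by
        intro v
        have hv := congrFun hx (Sum.inl v)
        rw [hmulinl x v] at hv
        have h1 : uu v + B.transpose.mulVec ww v = (-1 : ℝ) * uu v := by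
          rw [hv]; simp; rfl
        linarith
      have hBtw_eq : B.transpose.mulVec ww = (-2 : ℝ) • uu := funext fun v => by
        rw [hu v]; rfl
      have hBe : ∀ e, B.mulVec uu e + B.mulVec (B.transpose.mulVec ww) e = 0 := by
        intro e
        have hv := congrFun hx (Sum.inr e)
        rw [hmulinr x e] at hv
        have h1 : B.mulVec uu e + B.mulVec (B.transpose.mulVec ww) e - ww e
            = (-1 : ℝ) * ww e := by rw [hv]; simp; rfl
        linarith
      have hBu0 : B.mulVec uu = 0 := by
        funext e
        have h1 := hBe e
        rw [hBtw_eq, Matrix.mulVec_smul] at h1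
        have h2 : B.mulVec uu e + (-2 : ℝ) * B.mulVec uu e = 0 := by
          simpa using h1
        rw [Pi.zero_apply]; linarith
      have hker : ww ∈ LinearMap.ker B.transpose.mulVecLin := by
        rw [← Matrix.ker_mulVecLin_transpose_mul_self, LinearMap.mem_ker,
          Matrix.mulVecLin_apply, ← Matrix.mulVec_mulVec, Matrix.transpose_transpose,
          hBtw_eq, Matrix.mulVec_smul, hBu0, smul_zero]
      have hw0 : B.transpose.mulVec ww = 0 := by
        rwa [LinearMap.mem_ker, Matrix.mulVecLin_apply] at hker
      have hu0 : ∀ v, uu v = 0 := by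
        intro v
        have h1 := hu v
        rw [congrFun hw0 v] at h1
        simp only [Pi.zero_apply] at h1
        linarith
      refine ⟨ww, hker, ?_⟩
      funext z
      cases z with
      | inl v => exact (hu0 v).symm
      | inr e => rfl
    · rintro ⟨ww, hker, rfl⟩
      have hw0 : B.transpose.mulVec ww = 0 := by
        rwa [LinearMap.mem_ker, Matrix.mulVecLin_apply] at hker
      have hcompr : (fun e => (elimR ww : ({x // x ∈ K} ⊕ E) → ℝ) (Sum.inr e)) = ww := rfl
      have hcompl : (fun v => (elimR ww : ({x // x ∈ K} ⊕ E) → ℝ) (Sum.inl v))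
          = (0 : {x // x ∈ K} → ℝ) := rfl
      funext z
      cases z with
      | inl v =>
        rw [hmulinl _ v, hcompr, hw0]
        simp [elimR]
      | inr e =>
        rw [hmulinr _ e, hcompr, hcompl, hw0, Matrix.mulVec_zero]
        simp [elimR]
  -- final assembly
  constructor
  · rw [Matrix.toLin'_apply', Matrix.ker_mulVecLin_transpose_mul_self, heig1,
      ← (Submodule.equivMapOfInjective elimL elimL_inj (LinearMap.ker B.mulVecLin)).finrank_eq]
    exact (finrank_ker_scale B d0 σ hσ2 hkerB).symm
  · rw [show d0 * d0.transpose = d0.transpose.transpose * d0.transpose by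
        rw [Matrix.transpose_transpose]]
    rw [Matrix.toLin'_apply', Matrix.ker_mulVecLin_transpose_mul_self, heig2,
      ← (Submodule.equivMapOfInjective elimR elimR_inj
          (LinearMap.ker B.transpose.mulVecLin)).finrank_eq]
    exact (finrank_ker_scale B.transpose d0.transpose ε hε2 hkerBt).symm
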